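/- Let R > 0 with d = R² a positive integer, and let L*, ε ≥ 0 with L* + ε ≤ 1/4. There exists a distribution D over ℝᵈ × {±1} and a vector u ∈ ℝᵈ with ‖u‖ = R and expected hinge loss L* such that any linear classifier w ∈ ℝᵈ supported on fewer than d/2 coordinates (i.e. w is a linear combination of fewer than R²/2 of the standard basis vectors occurring in the data) has expected zero-one loss strictly greater than L* + ε. Concretely: D samples i uniformly from {1,…,d}, sets x = eᵢ, and y = z with probability 1 - L*/2 and y = -z otherwise for a fixed sign z; u = z·(1,…,1). Then any w with support of size k < d/2, together with any fixed rule for classifying points with ⟨w,x⟩ = 0, errs with probability at least (d-k)/(2d) > 1/4 ≥ L* + ε for an adversarial choice of z. -/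

import Mathlib

open scoped Classical

theorem stmt5 (d : ℕ) (hd : 0 < d) (L ε : ℝ) (hL : 0 ≤ L) (hε : 0 ≤ ε)
    (hLe : L + ε ≤ 1 / 4) (ψ : ℝ → ℝ) (hψ : ∀ t, ψ t ∈ Set.Icc (0 : ℝ) 1) :
    ∃ (q : Fin d × Bool → ℝ) (u : EuclideanSpace ℝ (Fin d)),
      (∀ a, 0 ≤ q a) ∧ (∑ a : Fin d × Bool, q a = 1) ∧
      ‖u‖ = Real.sqrt d ∧
      (∑ a : Fin d × Bool, q a * max 0 (1 - (if a.2 then (1 : ℝ) else -1) * u a.1) = L) ∧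
      (∀ w : Fin d → ℝ,
        2 * (Finset.univ.filter fun i => w i ≠ 0).card < d →
        ((d : ℝ) - (Finset.univ.filter fun i => w i ≠ 0).card) / (2 * d) ≤
          (∑ a : Fin d × Bool, q a * (if a.2 then 1 - ψ (w a.1) else ψ (w a.1))) ∧
        L + ε <
          ∑ a : Fin d × Bool, q a * (if a.2 then 1 - ψ (w a.1) else ψ (w a.1))) := by
  have hdR : (0:ℝ) < d := by exact_mod_cast hd
  have hL4 : L ≤ 1/4 := by linarith
  obtain ⟨z, hz⟩ : ∃ z : Bool, (1:ℝ)/2 ≤ (if z then 1 - ψ 0 else ψ 0) := by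
    rcases le_or_gt (ψ 0) (1/2) with h | h
    · exact ⟨true, by simp; linarith⟩
    · exact ⟨false, by simpa using h.le⟩
  refine ⟨fun a => (if a.2 = z then 1 - L/2 else L/2)/d,
    (WithLp.toLp 2 (fun _ => if z then (1:ℝ) else -1) : EuclideanSpace ℝ (Fin d)), ?_, ?_, ?_, ?_, ?_⟩
  · intro a
    apply div_nonneg _ hdR.le
    split_ifs <;> linarith
  · rw [Fintype.sum_prod_type]
    cases z <;> simp [Fintype.sum_bool, Finset.sum_const, Finset.card_univ] <;>
      field_simp <;> ring
  · rw [EuclideanSpace.norm_eq]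
    congr 1
    cases z <;> simp
  · rw [Fintype.sum_prod_type]
    cases z <;>
      simp [Fintype.sum_bool, Finset.sum_const, Finset.card_univ] <;> field_simp <;> ring
  · intro w hw
    set k := (Finset.univ.filter fun i => w i ≠ 0).card with hk
    have hkd : (2:ℝ) * k < d := by exact_mod_cast hw
    have hcard : ((Finset.univ.filter fun i => w i = 0).card : ℝ) = d - k := by
      have := Finset.card_filter_add_card_filter_not
        (s := (Finset.univ : Finset (Fin d))) (p := fun i => w i = 0)
      simp only [Finset.card_univ, Fintype.card_fin] at this
      have h2 : (Finset.univ.filter fun i => ¬ w i = 0) =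
          (Finset.univ.filter fun i => w i ≠ 0) := rfl
      rw [h2] at this
      push_cast [← this]
      ring
    have hmain : ((d : ℝ) - k) / (2 * d) ≤
        ∑ a : Fin d × Bool, (if a.2 = z then 1 - L/2 else L/2)/d *
          (if a.2 then 1 - ψ (w a.1) else ψ (w a.1)) := by
      rw [Fintype.sum_prod_type]
      have hstep : ∀ i : Fin d, w i = 0 →
          1/(2*(d:ℝ)) ≤ ∑ b : Bool, (if b = z then 1 - L/2 else L/2)/d *
            (if b then 1 - ψ (w i) else ψ (w i)) := by
        intro i hi
        have h0 := hψ 0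
        simp only [Set.mem_Icc] at h0
        have h0a := h0.1
        have h0b := h0.2
        have key : (1:ℝ)/2 ≤ (if (true:Bool) = z then 1 - L/2 else L/2) * (1 - ψ 0) +
            (if (false:Bool) = z then 1 - L/2 else L/2) * ψ 0 := by
          cases z <;> simp at hz ⊢ <;> nlinarith
        rw [Fintype.sum_bool, hi, div_mul_eq_mul_div, div_mul_eq_mul_div, ← add_div,
          show 1/(2*(d:ℝ)) = (1/2)/d by ring, div_le_div_iff_of_pos_right hdR]
        exact key
      have hnn : ∀ i ∈ Finset.univ, (0:ℝ) ≤ ∑ b : Bool, (if b = z then 1 - L/2 else L/2)/d *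
          (if b then 1 - ψ (w i) else ψ (w i)) := by
        intro i _
        apply Finset.sum_nonneg
        intro b _
        have := hψ (w i)
        simp only [Set.mem_Icc] at this
        apply mul_nonneg (div_nonneg _ hdR.le)
        · split_ifs <;> linarith
        · split_ifs <;> linarith
      calc ((d : ℝ) - k) / (2 * d)
          = (Finset.univ.filter fun i => w i = 0).card • (1/(2*(d:ℝ))) := by
            rw [nsmul_eq_mul, hcard]; ring
        _ ≤ ∑ i ∈ (Finset.univ.filter fun i => w i = 0),
              ∑ b : Bool, (if b = z then 1 - L/2 else L/2)/d *
                (if b then 1 - ψ (w i) else ψ (w i)) := by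
            apply Finset.card_nsmul_le_sum
            intro i hi
            exact hstep i (by simpa using hi)
        _ ≤ ∑ i : Fin d, ∑ b : Bool, (if b = z then 1 - L/2 else L/2)/d *
                (if b then 1 - ψ (w i) else ψ (w i)) := by
            apply Finset.sum_le_sum_of_subset_of_nonneg (Finset.filter_subset _ _)
            intro i _ _
            exact hnn i (Finset.mem_univ i)
    refine ⟨hmain, ?_⟩
    have h14 : (1:ℝ)/4 < ((d : ℝ) - k) / (2 * d) := by
      rw [lt_div_iff₀ (by positivity)]
      linarith
    linarith
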